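/- Let N be a positive integer, let σ be a uniformly distributed random permutation of {1,…,N}, and let Y_k = #{ i ≤ k : σ(i) ≤ σ(k) } be the relative ranks. Then for all integers i, k with 2 ≤ i < k ≤ N, the probability of the event { Y_s > 2 for all s with i < s < k, and Y_k ≤ 2 } equals 2(i−1)i/((k−2)(k−1)k). -/

import Mathlib

open MeasureTheory ProbabilityTheory
open scoped ENNReal

noncomputable section

instance permMeasurableSpace (N : ℕ) : MeasurableSpace (Equiv.Perm (Fin N)) := ⊤

/-- The uniform probability measure on the set of all permutations of `{1,…,N}`. -/
noncomputable def uniformPerm (N : ℕ) : Measure (Equiv.Perm (Fin N)) :=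
  (PMF.uniformOfFintype (Equiv.Perm (Fin N))).toMeasure

/-- The relative rank `Y_k = #{ i : 1 ≤ i ≤ k ∧ σ(i) ≤ σ(k) }` of the `k`-th item
(1-indexed: the paper's item `i ∈ {1,…,N}` is the element `⟨i-1, _⟩ : Fin N`). -/
def relRank (N : ℕ) (σ : Equiv.Perm (Fin N)) (k : ℕ) : ℕ :=
  if h : 1 ≤ k ∧ k ≤ N then
    (Finset.univ.filter fun i : Fin N => (i : ℕ) + 1 ≤ k ∧ σ i ≤ σ ⟨k - 1, by omega⟩).card
  else 0

namespace FirstCand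

open Finset Nat

variable {N : ℕ}

/-- rank of position j among first j+1 positions -/
def rk (σ : Equiv.Perm (Fin N)) (j : Fin N) : ℕ :=
  (univ.filter fun i : Fin N => i ≤ j ∧ σ i ≤ σ j).card

lemma rk_pos (σ : Equiv.Perm (Fin N)) (j : Fin N) : 1 ≤ rk σ j := by
  rw [Nat.one_le_iff_ne_zero, rk]
  exact Finset.card_ne_zero_of_mem (a := j) (by simp)

lemma rk_le (σ : Equiv.Perm (Fin N)) (j : Fin N) : rk σ j ≤ (j : ℕ) + 1 := by
  have h : (univ.filter fun i : Fin N => i ≤ j ∧ σ i ≤ σ j) ⊆ Iic j := by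
    intro x hx; simp only [mem_filter] at hx; exact mem_Iic.2 hx.2.1
  simpa [rk, Fin.card_Iic] using card_le_card h

lemma rk_eq_succ (σ : Equiv.Perm (Fin N)) (j : Fin N) :
    rk σ j = (univ.filter fun i : Fin N => i < j ∧ σ i < σ j).card + 1 := by
  rw [rk]
  have : (univ.filter fun i : Fin N => i ≤ j ∧ σ i ≤ σ j)
      = insert j (univ.filter fun i : Fin N => i < j ∧ σ i < σ j) := by
    ext x
    simp only [mem_filter, mem_insert, mem_univ, true_and]
    constructor
    · rintro ⟨h1, h2⟩
      rcases eq_or_lt_of_le h1 with h | h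
      · exact Or.inl h
      · refine Or.inr ⟨h, lt_of_le_of_ne h2 ?_⟩
        intro he; exact absurd (σ.injective he) (ne_of_lt h)
    · rintro (rfl | ⟨h1, h2⟩)
      · exact ⟨le_rfl, le_rfl⟩
      · exact ⟨le_of_lt h1, le_of_lt h2⟩
  rw [this, card_insert_of_notMem (by simp)]

/-- key comparison lemma -/
lemma lt_top_iff_card (σ : Equiv.Perm (Fin N)) (a j : Fin N) (haj : a < j) :
    σ a < σ j ↔ (univ.filter fun i : Fin N => i < j ∧ σ i ≤ σ a).card < rk σ j := by
  rw [rk_eq_succ, Nat.lt_succ_iff]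
  constructor
  · intro h
    refine card_le_card fun x hx => ?_
    simp only [mem_filter] at hx ⊢
    exact ⟨hx.1, hx.2.1, lt_of_le_of_lt hx.2.2 h⟩
  · intro h
    by_contra hc
    push_neg at hc
    have hne : σ j ≠ σ a := fun he => absurd (σ.injective he) (ne_of_gt haj)
    have hlt : σ j < σ a := lt_of_le_of_ne hc hne
    have hss : (univ.filter fun i : Fin N => i < j ∧ σ i < σ j)
        ⊂ (univ.filter fun i : Fin N => i < j ∧ σ i ≤ σ a) := by
      refine Finset.ssubset_iff_of_subset (fun x hx => ?_) |>.2 ⟨a, ?_, ?_⟩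
      · simp only [mem_filter] at hx ⊢
        exact ⟨hx.1, hx.2.1, le_of_lt (lt_trans hx.2.2 hlt)⟩
      · simp [haj]
      · simp [not_lt_of_ge (le_of_lt hlt)]
    exact absurd (card_lt_card hss) (not_lt_of_ge h)

lemma rk_injective (σ τ : Equiv.Perm (Fin N)) (h : ∀ j, rk σ j = rk τ j) : σ = τ := by
  have key : ∀ n : ℕ, ∀ a b : Fin N, (a : ℕ) < n → (b : ℕ) < n → (σ a < σ b ↔ τ a < τ b) := by
    intro n
    induction n with
    | zero => intro a b ha _; omega
    | succ n ih =>
      have half : ∀ a b : Fin N, (a : ℕ) < n → (b : ℕ) = n → (σ a < σ b ↔ τ a < τ b) := by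
        intro a b ha hb
        have hab : a < b := by rw [Fin.lt_def]; omega
        rw [lt_top_iff_card σ a b hab, lt_top_iff_card τ a b hab, h b]
        have hfe : (univ.filter fun i : Fin N => i < b ∧ σ i ≤ σ a)
            = (univ.filter fun i : Fin N => i < b ∧ τ i ≤ τ a) := by
          apply Finset.filter_congr
          intro x _
          simp only [eq_iff_iff, and_congr_right_iff]
          intro hxb
          have hxn : (x : ℕ) < n := by rw [Fin.lt_def] at hxb; omega
          rcases eq_or_ne x a with rfl | hxa
          · simp
          · have h1 : σ x ≤ σ a ↔ σ x < σ a :=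
              ⟨fun hh => lt_of_le_of_ne hh fun he => hxa (σ.injective he), le_of_lt⟩
            have h2 : τ x ≤ τ a ↔ τ x < τ a :=
              ⟨fun hh => lt_of_le_of_ne hh fun he => hxa (τ.injective he), le_of_lt⟩
            rw [h1, h2, ih x a hxn ha]
        rw [hfe]
      intro a b ha hb
      rcases Nat.lt_or_ge (a : ℕ) n with ha' | ha'
      · rcases Nat.lt_or_ge (b : ℕ) n with hb' | hb'
        · exact ih a b ha' hb'
        · exact half a b ha' (by omega)
      · have han : (a : ℕ) = n := by omega
        rcases Nat.lt_or_ge (b : ℕ) n with hb' | hb'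
        · have hne : a ≠ b := fun he => by rw [he] at han; omega
          have e1 : σ a < σ b ↔ ¬σ b < σ a := by
            constructor
            · exact fun hh => asymm hh
            · intro hh
              rcases lt_or_gt_of_ne (fun he => hne (σ.injective he)) with h' | h'
              exacts [h', absurd h' hh]
          have e2 : τ a < τ b ↔ ¬τ b < τ a := by
            constructor
            · exact fun hh => asymm hh
            · intro hh
              rcases lt_or_gt_of_ne (fun he => hne (τ.injective he)) with h' | h'
              exacts [h', absurd h' hh]
          rw [e1, e2, half b a hb' han]
        · have : a = b := Fin.ext (by omega)
          subst this
          simp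
  have hcmp : ∀ a b : Fin N, σ a < σ b ↔ τ a < τ b := fun a b => key N a b a.isLt b.isLt
  have hsm : StrictMono (σ ∘ τ.symm) := by
    intro x y hxy
    have : τ (τ.symm x) < τ (τ.symm y) := by simpa using hxy
    exact (hcmp _ _).2 this
  have hid : StrictMono (id : Fin N → Fin N) := strictMono_id
  have hr : Set.range (σ ∘ τ.symm) = Set.range (id : Fin N → Fin N) := by
    rw [Set.range_id]
    exact Set.range_eq_univ.2 ((σ.surjective).comp τ.symm.surjective)
  haveI hwf : WellFoundedLT (Fin N) := inferInstance
  have heq : (σ ∘ τ.symm : Fin N → Fin N) = id :=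
    (@StrictMono.range_inj (Fin N) (Fin N) _ _ hwf _ _ hsm hid).1 hr
  ext x
  have h3 := congrFun heq (τ x)
  have h4 : σ x = τ x := by simpa using h3
  exact congrArg Fin.val h4

def codeF (σ : Equiv.Perm (Fin N)) : ∀ j : Fin N, Fin ((j : ℕ) + 1) :=
  fun j => ⟨rk σ j - 1, by have h1 := rk_le σ j; have h2 := rk_pos σ j; omega⟩

lemma codeF_val (σ : Equiv.Perm (Fin N)) (j : Fin N) : (codeF σ j : ℕ) = rk σ j - 1 := rfl

lemma codeF_injective : Function.Injective (codeF (N := N)) := by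
  intro σ τ h
  apply rk_injective
  intro j
  have h0 := congrFun h j
  have h1 := rk_pos σ j
  have h2 := rk_pos τ j
  have h3 : rk σ j - 1 = rk τ j - 1 := congrArg Fin.val h0
  omega

lemma codeF_bijective : Function.Bijective (codeF (N := N)) := by
  rw [Fintype.bijective_iff_injective_and_card]
  refine ⟨codeF_injective, ?_⟩
  rw [Fintype.card_perm, Fintype.card_pi, Fintype.card_fin]
  simp only [Fintype.card_fin]
  rw [Fin.prod_univ_eq_prod_range (fun j => j + 1) N]
  exact (Finset.prod_range_add_one_eq_factorial N).symm

lemma card_preimage (S : Finset (∀ j : Fin N, Fin ((j : ℕ) + 1))) :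
    (univ.filter fun σ : Equiv.Perm (Fin N) => codeF σ ∈ S).card = S.card := by
  apply Finset.card_bij (fun σ _ => codeF σ)
  · intro σ hσ
    exact (Finset.mem_filter.1 hσ).2
  · intro a _ b _ hab
    exact codeF_injective hab
  · intro y hy
    obtain ⟨σ, rfl⟩ := codeF_bijective.surjective y
    exact ⟨σ, by simp [hy], rfl⟩

instance (N : ℕ) : MeasurableSingletonClass (Equiv.Perm (Fin N)) := ⟨fun _ => trivial⟩

lemma uniform_apply (N : ℕ) (E : Set (Equiv.Perm (Fin N))) [DecidablePred (· ∈ E)] :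
    uniformPerm N E
      = ((univ.filter (· ∈ E)).card : ℝ≥0∞) / ((Nat.factorial N : ℕ) : ℝ≥0∞) := by
  classical
  rw [uniformPerm, PMF.toMeasure_apply_fintype]
  simp only [PMF.uniformOfFintype_apply, Set.indicator_apply]
  rw [Finset.sum_ite, Finset.sum_const, Finset.sum_const]
  simp only [smul_zero, add_zero, nsmul_eq_mul]
  rw [Fintype.card_perm, Fintype.card_fin, div_eq_mul_inv]

lemma card_filter_le_one (n : ℕ) (hn : 2 ≤ n) :
    (univ.filter fun x : Fin n => (x : ℕ) ≤ 1).card = 2 := by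
  have h : (univ.filter fun x : Fin n => (x : ℕ) ≤ 1)
      = {(⟨0, by omega⟩ : Fin n), ⟨1, by omega⟩} := by
    ext x
    simp only [mem_filter, mem_univ, true_and, mem_insert, mem_singleton, Fin.ext_iff]
    omega
  rw [h, card_insert_of_notMem (by simp [Fin.ext_iff]), card_singleton]

lemma card_filter_ge_two (n : ℕ) : (univ.filter fun x : Fin n => 2 ≤ (x : ℕ)).card = n - 2 := by
  rcases Nat.lt_or_ge n 2 with hn | hn
  · have h : (univ.filter fun x : Fin n => 2 ≤ (x : ℕ)) = ∅ := by
      ext x; simp only [mem_filter, mem_univ, true_and, notMem_empty, iff_false]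
      have := x.isLt; omega
    rw [h]; simp; omega
  · have h := Finset.card_filter_add_card_filter_not
      (s := (univ : Finset (Fin n))) (p := fun x : Fin n => 2 ≤ (x : ℕ))
    have h2 : (univ.filter fun x : Fin n => ¬2 ≤ (x : ℕ)).card = 2 := by
      have : (univ.filter fun x : Fin n => ¬2 ≤ (x : ℕ))
          = (univ.filter fun x : Fin n => (x : ℕ) ≤ 1) := by
        apply filter_congr; intro x _; simp
      rw [this]; exact card_filter_le_one n hn
    rw [h2, Finset.card_univ, Fintype.card_fin] at h
    omega

lemma fact_prod_Ico (a b : ℕ) (h : a ≤ b) :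
    a ! * ∏ m ∈ Ico (a + 1) (b + 1), m = b ! := by
  induction b, h using Nat.le_induction with
  | base => simp
  | succ b hb ih =>
    rw [show b + 1 + 1 = (b + 1) + 1 from rfl, Finset.prod_Ico_succ_top (by omega),
      ← mul_assoc, ih, Nat.factorial_succ, mul_comm]

lemma big_prod (n m M : ℕ) (h1 : n ≤ m) (h2 : m + 3 ≤ M) :
    (∏ j ∈ range M, (if n + 2 ≤ j ∧ j + 1 < m + 3 then j - 1
        else if j + 1 = m + 3 then 2 else j + 1)) * ((m + 1) * (m + 2) * (m + 3))
      = 2 * (n + 1) * (n + 2) * M ! := by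
  set g : ℕ → ℕ := fun j => if n + 2 ≤ j ∧ j + 1 < m + 3 then j - 1
    else if j + 1 = m + 3 then 2 else j + 1 with hg
  have e0 : range M = Ico 0 M := by rw [Finset.range_eq_Ico]
  have split1 : (∏ j ∈ Ico 0 (n+2), g j) * (∏ j ∈ Ico (n+2) M, g j) = ∏ j ∈ Ico 0 M, g j :=
    Finset.prod_Ico_consecutive g (by omega) (by omega)
  have split2 : (∏ j ∈ Ico (n+2) (m+2), g j) * (∏ j ∈ Ico (m+2) (m+3), g j)
      = ∏ j ∈ Ico (n+2) (m+3), g j := Finset.prod_Ico_consecutive g (by omega) (by omega)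
  have split3 : (∏ j ∈ Ico (n+2) (m+3), g j) * (∏ j ∈ Ico (m+3) M, g j)
      = ∏ j ∈ Ico (n+2) M, g j := Finset.prod_Ico_consecutive g (by omega) (by omega)
  have hA : (∏ j ∈ Ico 0 (n+2), g j) = (n+2)! := by
    rw [← Finset.range_eq_Ico, ← Finset.prod_range_add_one_eq_factorial]
    apply Finset.prod_congr rfl
    intro x hx
    rw [Finset.mem_range] at hx
    simp only [hg]
    rw [if_neg (by omega), if_neg (by omega)]
  have hB : (∏ j ∈ Ico (n+2) (m+2), g j) = ∏ j ∈ Ico (n+1) (m+1), j := by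
    rw [Finset.prod_Ico_eq_prod_range, Finset.prod_Ico_eq_prod_range]
    have hlen : m + 2 - (n + 2) = m + 1 - (n + 1) := by omega
    rw [hlen]
    apply Finset.prod_congr rfl
    intro x hx
    rw [Finset.mem_range] at hx
    simp only [hg]
    rw [if_pos (by omega)]
    omega
  have hC : (∏ j ∈ Ico (m+2) (m+3), g j) = 2 := by
    rw [show m + 3 = (m+2) + 1 from rfl, Nat.Ico_succ_singleton, Finset.prod_singleton]
    simp only [hg]
    rw [if_neg (by omega)]
    simp
  have hD : (∏ j ∈ Ico (m+3) M, g j) = ∏ j ∈ Ico (m+4) (M+1), j := by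
    rw [Finset.prod_Ico_eq_prod_range, Finset.prod_Ico_eq_prod_range]
    have hlen : M - (m + 3) = M + 1 - (m + 4) := by omega
    rw [hlen]
    apply Finset.prod_congr rfl
    intro x hx
    rw [Finset.mem_range] at hx
    simp only [hg]
    rw [if_neg (by omega), if_neg (by omega)]
    omega
  have hBf : n ! * ∏ j ∈ Ico (n+1) (m+1), j = m ! := fact_prod_Ico n m h1
  have hDf : (m+3)! * ∏ j ∈ Ico (m+4) (M+1), j = M ! := fact_prod_Ico (m+3) M h2
  rw [e0, ← split1, ← split3, ← split2, hA, hB, hC, hD, ← hDf]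
  have e1 : (n+2)! = (n+2) * ((n+1) * n !) := by
    rw [show n+2 = (n+1)+1 from rfl, Nat.factorial_succ, Nat.factorial_succ]
  have e2 : (m+3)! = (m+3) * ((m+2) * ((m+1) * m !)) := by
    rw [show m+3 = (m+2)+1 from rfl, Nat.factorial_succ, show m+2 = (m+1)+1 from rfl,
      Nat.factorial_succ, Nat.factorial_succ]
  rw [e1, e2, ← hBf]
  ring

lemma relRank_eq_rk (σ : Equiv.Perm (Fin N)) (s : ℕ) (h1 : 1 ≤ s) (h2 : s ≤ N) :
    relRank N σ s = rk σ ⟨s - 1, by omega⟩ := by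
  rw [relRank, dif_pos ⟨h1, h2⟩, rk]
  congr 1
  apply Finset.filter_congr
  intro x _
  simp only [eq_iff_iff, and_congr_left_iff]
  intro _
  rw [Fin.le_def]
  simp only [Fin.val_mk]
  omega

end FirstCand

/-- The probability that no candidate (relative rank ≤ 2) appears at times strictly
between `i` and `k` and a candidate appears at time `k` equals
`2(i−1)i/((k−2)(k−1)k)`. -/
theorem prob_first_candidate_at (N i k : ℕ) (hi : 2 ≤ i) (hik : i < k) (hkN : k ≤ N) :
    uniformPerm N {σ : Equiv.Perm (Fin N) |
        (∀ s : ℕ, i < s → s < k → 2 < relRank N σ s) ∧ relRank N σ k ≤ 2}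
      = ((2 * (i - 1) * i : ℕ) : ℝ≥0∞) / (((k - 2) * (k - 1) * k : ℕ) : ℝ≥0∞) := by
  classical
  obtain ⟨n, rfl⟩ : ∃ n, i = n + 2 := ⟨i - 2, by omega⟩
  obtain ⟨m, rfl⟩ : ∃ m, k = m + 3 := ⟨k - 3, by omega⟩
  set E : Set (Equiv.Perm (Fin N)) := {σ : Equiv.Perm (Fin N) |
        (∀ s : ℕ, n + 2 < s → s < m + 3 → 2 < relRank N σ s) ∧ relRank N σ (m + 3) ≤ 2} with hE
  set T : ∀ j : Fin N, Finset (Fin ((j : ℕ) + 1)) := fun j =>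
    if n + 2 ≤ (j : ℕ) ∧ (j : ℕ) + 1 < m + 3 then Finset.univ.filter fun x => 2 ≤ (x : ℕ)
    else if (j : ℕ) + 1 = m + 3 then Finset.univ.filter fun x => (x : ℕ) ≤ 1
    else Finset.univ with hT
  have hmem : ∀ σ : Equiv.Perm (Fin N), σ ∈ E ↔ FirstCand.codeF σ ∈ Fintype.piFinset T := by
    intro σ
    rw [Fintype.mem_piFinset]
    constructor
    · rintro ⟨hmid, hlast⟩ j
      simp only [hT]
      split_ifs with hc1 hc2
      · have hs := hmid ((j : ℕ) + 1) (by omega) (by omega)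
        rw [FirstCand.relRank_eq_rk σ ((j : ℕ) + 1) (by omega) (by omega : (j : ℕ) + 1 ≤ N)]
          at hs
        have hjj : (⟨(j : ℕ) + 1 - 1, by omega⟩ : Fin N) = j := Fin.ext (by simp)
        rw [hjj] at hs
        simp only [Finset.mem_filter, Finset.mem_univ, true_and, FirstCand.codeF_val]
        omega
      · rw [FirstCand.relRank_eq_rk σ (m + 3) (by omega) hkN] at hlast
        have hjj : (⟨m + 3 - 1, by omega⟩ : Fin N) = j := Fin.ext (by simp; omega)
        rw [hjj] at hlast
        have hp := FirstCand.rk_pos σ j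
        simp only [Finset.mem_filter, Finset.mem_univ, true_and, FirstCand.codeF_val]
        omega
      · exact Finset.mem_univ _
    · intro h
      constructor
      · intro s hs1 hs2
        have hsN : s ≤ N := by omega
        have hthis := h ⟨s - 1, by omega⟩
        simp only [hT] at hthis
        rw [if_pos (by simp; omega)] at hthis
        simp only [Finset.mem_filter, Finset.mem_univ, true_and, FirstCand.codeF_val] at hthis
        have hp := FirstCand.rk_pos σ (⟨s - 1, by omega⟩ : Fin N)
        rw [FirstCand.relRank_eq_rk σ s (by omega) hsN]
        omega
      · have hthis := h ⟨m + 3 - 1, by omega⟩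
        simp only [hT] at hthis
        rw [if_neg (by simp), if_pos (by simp)] at hthis
        simp only [Finset.mem_filter, Finset.mem_univ, true_and, FirstCand.codeF_val] at hthis
        rw [FirstCand.relRank_eq_rk σ (m + 3) (by omega) hkN]
        have hp := FirstCand.rk_pos σ (⟨m + 3 - 1, by omega⟩ : Fin N)
        omega
  have hcard : (Finset.univ.filter (· ∈ E)).card = (Fintype.piFinset T).card := by
    rw [← FirstCand.card_preimage (Fintype.piFinset T)]
    congr 1
    apply Finset.filter_congr
    intro σ _
    exact hmem σ
  have hprod : (Fintype.piFinset T).card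
      = ∏ j ∈ Finset.range N, (if n + 2 ≤ j ∧ j + 1 < m + 3 then j - 1
          else if j + 1 = m + 3 then 2 else j + 1) := by
    rw [Fintype.card_piFinset]
    rw [← Fin.prod_univ_eq_prod_range
      (fun j => if n + 2 ≤ j ∧ j + 1 < m + 3 then j - 1
          else if j + 1 = m + 3 then 2 else j + 1) N]
    apply Finset.prod_congr rfl
    intro j _
    simp only [hT]
    split_ifs with h1 h2
    · rw [FirstCand.card_filter_ge_two]
      omega
    · exact FirstCand.card_filter_le_one _ (by omega)
    · simp
  have harith := FirstCand.big_prod n m N (by omega) (by omega)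
  have ha1 : n + 2 - 1 = n + 1 := by omega
  have ha2 : m + 3 - 2 = m + 1 := by omega
  have ha3 : m + 3 - 1 = m + 2 := by omega
  have hnum : 2 * (n + 2 - 1) * (n + 2) = 2 * (n + 1) * (n + 2) := by rw [ha1]
  have hden : (m + 3 - 2) * (m + 3 - 1) * (m + 3) = (m + 1) * (m + 2) * (m + 3) := by
    rw [ha2, ha3]
  rw [FirstCand.uniform_apply, hnum, hden, hcard, hprod]
  rw [ENNReal.div_eq_div_iff]
  · rw [← Nat.cast_mul, ← Nat.cast_mul, Nat.cast_inj]
    calc ((m + 1) * (m + 2) * (m + 3)) * ∏ j ∈ Finset.range N,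
          (if n + 2 ≤ j ∧ j + 1 < m + 3 then j - 1 else if j + 1 = m + 3 then 2 else j + 1)
        = (∏ j ∈ Finset.range N,
            (if n + 2 ≤ j ∧ j + 1 < m + 3 then j - 1 else if j + 1 = m + 3 then 2 else j + 1))
            * ((m + 1) * (m + 2) * (m + 3)) := Nat.mul_comm _ _
      _ = 2 * (n + 1) * (n + 2) * N.factorial := harith
      _ = N.factorial * (2 * (n + 1) * (n + 2)) := Nat.mul_comm _ _
  · exact Nat.cast_ne_zero.mpr (by positivity)
  · exact ENNReal.natCast_ne_top _
  · exact Nat.cast_ne_zero.mpr (Nat.factorial_ne_zero N)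
  · exact ENNReal.natCast_ne_top _

end
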